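/- Let F be a decomposable NNF over n Boolean variables. Define the SAT number SN(F, x) ∈ ℕ of F at an assignment x : Fin n → Bool recursively: SN of a literal (i, b) is 1 if x i = b and 0 otherwise; SN of an And node is the sum of the SNs of its children; SN of an Or node is the maximum of the SNs of its children. Define M(F) ∈ ℕ recursively: M of a literal is 1; M of an And node is the sum of the M-values of its children; M of an Or node is the maximum of the M-values of its children. Then max_{x : Fin n → Bool} SN(F, x) = M(F); that is, SN(F, x) ≤ M(F) for all x, and there exists x with SN(F, x) = M(F). -/

import Mathlib

/-- A negation normal form circuit (NNF) over `n` Boolean variables. -/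
inductive NNF (n : ℕ) where
  | lit : Fin n → Bool → NNF n
  | and : List (NNF n) → NNF n
  | or : List (NNF n) → NNF n

namespace NNF

variable {n : ℕ}

/-- The scope of an NNF: the set of variable indices appearing in its literals. -/
def scope : NNF n → Finset (Fin n)
  | .lit i _ => {i}
  | .and l => (l.attach.map fun c => c.1.scope).foldr (· ∪ ·) ∅
  | .or l => (l.attach.map fun c => c.1.scope).foldr (· ∪ ·) ∅
decreasing_by all_goals (simp_wf; have := List.sizeOf_lt_of_mem c.2; omega)

/-- An NNF is decomposable iff the children of every And node have pairwise
disjoint scopes. -/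
inductive Decomposable : NNF n → Prop
  | lit (i : Fin n) (b : Bool) : Decomposable (.lit i b)
  | and {l : List (NNF n)} :
      (∀ G ∈ l, Decomposable G) →
      l.Pairwise (fun G H => Disjoint G.scope H.scope) →
      Decomposable (.and l)
  | or {l : List (NNF n)} :
      (∀ G ∈ l, Decomposable G) → Decomposable (.or l)

/-- The SAT number `SN(F, x)` of an NNF at an assignment `x`: the SN of a
literal `(i, b)` is `1` if `x i = b` and `0` otherwise; the SN of an And node is
the sum of the SNs of its children; the SN of an Or node is the maximum of the
SNs of its children. -/
def SN : NNF n → (Fin n → Bool) → ℕ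
  | .lit i b, x => if x i = b then 1 else 0
  | .and l, x => (l.attach.map fun c => c.1.SN x).sum
  | .or l, x => (l.attach.map fun c => c.1.SN x).foldr max 0
decreasing_by all_goals (simp_wf; have := List.sizeOf_lt_of_mem c.2; omega)

/-- The bottom-up MAX-SAT pass `M` (summation in the max-sum semiring): `M` of
a literal is `1`, of an And node the sum of its children's values, of an Or
node the maximum of its children's values. -/
def maxSat : NNF n → ℕ
  | .lit _ _ => 1
  | .and l => (l.attach.map fun c => c.1.maxSat).sum
  | .or l => (l.attach.map fun c => c.1.maxSat).foldr max 0
decreasing_by all_goals (simp_wf; have := List.sizeOf_lt_of_mem c.2; omega)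

theorem mem_foldr_union {α} [DecidableEq α] {L : List (Finset α)} {a : α} :
    a ∈ L.foldr (· ∪ ·) ∅ ↔ ∃ s ∈ L, a ∈ s := by
  induction L with
  | nil => simp
  | cons s L ih => simp [ih]

theorem foldr_max_le_foldr_max {α} {l : List α} {f g : α → ℕ}
    (h : ∀ a ∈ l, f a ≤ g a) :
    (l.map f).foldr max 0 ≤ (l.map g).foldr max 0 := by
  induction l with
  | nil => simp
  | cons a l ih =>
      simp only [List.map_cons, List.foldr_cons]
      exact max_le_max (h a (by simp)) (ih fun b hb => h b (by simp [hb]))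

theorem le_foldr_max {L : List ℕ} {a : ℕ} (ha : a ∈ L) : a ≤ L.foldr max 0 := by
  induction L with
  | nil => simp at ha
  | cons b L ih =>
      simp only [List.foldr_cons]
      rcases List.mem_cons.mp ha with rfl | h
      · exact le_max_left _ _
      · exact le_trans (ih h) (le_max_right _ _)

theorem exists_foldr_max {L : List ℕ} (h : L ≠ []) : ∃ a ∈ L, L.foldr max 0 = a := by
  induction L with
  | nil => simp at h
  | cons b L ih =>
      rcases eq_or_ne L [] with rfl | hL
      · exact ⟨b, by simp⟩
      · obtain ⟨a, ha, hm⟩ := ih hL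
        simp only [List.foldr_cons, hm]
        rcases le_total b a with hb | hb
        · exact ⟨a, List.mem_cons_of_mem _ ha, max_eq_right hb⟩
        · exact ⟨b, List.mem_cons_self, max_eq_left hb⟩

theorem mem_scope_and {l : List (NNF n)} {G : NNF n} (hG : G ∈ l) {i : Fin n}
    (hi : i ∈ G.scope) : i ∈ (NNF.and l).scope := by
  rw [scope]
  exact mem_foldr_union.mpr ⟨G.scope, List.mem_map.mpr ⟨⟨G, hG⟩, List.mem_attach _ _, rfl⟩, hi⟩

theorem SN_le_maxSat : ∀ (F : NNF n) (x : Fin n → Bool), F.SN x ≤ F.maxSat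
  | .lit i b, x => by rw [SN, maxSat]; split <;> simp
  | .and l, x => by
      rw [SN, maxSat]
      exact List.sum_le_sum fun c _ => SN_le_maxSat c.1 x
  | .or l, x => by
      rw [SN, maxSat]
      exact foldr_max_le_foldr_max fun c _ => SN_le_maxSat c.1 x
decreasing_by all_goals (simp_wf; have := List.sizeOf_lt_of_mem c.2; omega)

theorem SN_congr : ∀ (F : NNF n) {x y : Fin n → Bool},
    (∀ i ∈ F.scope, x i = y i) → F.SN x = F.SN y
  | .lit i b, x, y, h => by
      rw [SN, SN, h i (by rw [scope]; simp)]
  | .and l, x, y, h => by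
      rw [SN, SN]
      congr 1
      refine List.map_congr_left fun c _ => ?_
      exact SN_congr c.1 fun i hi => h i (mem_scope_and c.2 hi)
  | .or l, x, y, h => by
      rw [SN, SN]
      congr 1
      refine List.map_congr_left fun c _ => ?_
      refine SN_congr c.1 fun i hi => h i ?_
      rw [scope]
      exact mem_foldr_union.mpr ⟨c.1.scope, List.mem_map.mpr ⟨c, List.mem_attach _ _, rfl⟩, hi⟩
decreasing_by all_goals (simp_wf; have := List.sizeOf_lt_of_mem c.2; omega)

theorem and_exists {l : List (NNF n)}
    (hex : ∀ G ∈ l, ∃ x, G.SN x = G.maxSat)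
    (hp : l.Pairwise (fun G H => Disjoint G.scope H.scope)) :
    ∃ x : Fin n → Bool, ∀ G ∈ l, G.SN x = G.maxSat := by
  induction l with
  | nil => exact ⟨fun _ => true, by simp⟩
  | cons G rest ih =>
      obtain ⟨xG, hxG⟩ := hex G (by simp)
      obtain ⟨xR, hxR⟩ := ih (fun H hH => hex H (by simp [hH])) hp.of_cons
      classical
      refine ⟨fun i => if i ∈ G.scope then xG i else xR i, ?_⟩
      intro H hH
      rcases List.mem_cons.mp hH with rfl | hH
      · rw [← hxG]
        exact SN_congr H fun i hi => by simp [hi]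
      · rw [← hxR H hH]
        refine SN_congr H fun i hi => ?_
        have hd : Disjoint G.scope H.scope := (List.pairwise_cons.mp hp).1 H hH
        have : i ∉ G.scope := fun hiG => (Finset.disjoint_left.mp hd hiG) hi
        simp [this]

theorem exists_SN_eq_maxSat (F : NNF n) (hdec : F.Decomposable) :
    ∃ x : Fin n → Bool, F.SN x = F.maxSat := by
  induction hdec with
  | lit i b =>
      refine ⟨fun _ => b, ?_⟩
      rw [SN, maxSat]; simp
  | @and l _ hp ih =>
      obtain ⟨x, hx⟩ := and_exists ih hp
      refine ⟨x, ?_⟩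
      rw [SN, maxSat]
      congr 1
      exact List.map_congr_left fun c _ => hx c.1 c.2
  | @or l _ ih =>
      rcases eq_or_ne l [] with rfl | hl
      · exact ⟨fun _ => true, by rw [SN, maxSat]; simp⟩
      · have hne : (l.attach.map fun c => c.1.maxSat) ≠ [] := by
          simp [hl]
        obtain ⟨a, ha, hm⟩ := exists_foldr_max hne
        obtain ⟨c, _, rfl⟩ := List.mem_map.mp ha
        obtain ⟨x, hx⟩ := ih c.1 c.2
        refine ⟨x, le_antisymm (SN_le_maxSat _ x) ?_⟩
        rw [SN, maxSat, hm, ← hx]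
        exact le_foldr_max (List.mem_map.mpr ⟨c, List.mem_attach _ _, rfl⟩)

end NNF

/-- Corollary 9: the MAX-SAT value of a decomposable NNF, i.e. the maximum of
its SAT number over all assignments, equals the linear-time bottom-up value
`M(F)`: `SN(F, x) ≤ M(F)` for all `x` and `SN(F, x) = M(F)` for some `x`. -/
theorem maxsat_decomposable_nnf
    {n : ℕ} (F : NNF n) (hdec : F.Decomposable) :
    (∀ x : Fin n → Bool, F.SN x ≤ F.maxSat) ∧
      ∃ x : Fin n → Bool, F.SN x = F.maxSat :=
  ⟨fun x => NNF.SN_le_maxSat F x, NNF.exists_SN_eq_maxSat F hdec⟩
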